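/- arXiv:2508.16353 — 2 statements merged into one kernel-verified Lean document; each statement's English description precedes it below -/
import Mathlib

section
/- Two times the ground state energy of H_{k,α} is bounded above by the sum of Dirichlet ground energies of the two outer path segments: 2 λ_0(V_k, α) ≤ λ_0(V_{k+r_min}, ∞δ_0) + λ_0(V_{k-r_max}, ∞δ_0) for all sufficiently large k. -/
open Finset Filter Topology Matrix

/-- The (Neumann) discrete Laplacian matrix of the path graph with `n` vertices. -/
noncomputable def pathLap (n : ℕ) : Matrix (Fin n) (Fin n) ℝ :=
  Matrix.of fun i j =>
    if i = j then (if i.val = 0 ∨ i.val = n - 1 then (1 : ℝ) else 2)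
    else if i.val + 1 = j.val ∨ j.val + 1 = i.val then -1 else 0

/-- The diagonal potential matrix: vertex `i` of `Fin (2k+1)` represents the integer `i - k`. -/
noncomputable def potMat (k : ℕ) (α : ℤ → ℝ) : Matrix (Fin (2*k+1)) (Fin (2*k+1)) ℝ :=
  Matrix.diagonal fun i => α ((i : ℤ) - k)

/-- The discrete Schrödinger operator `H_{k,α} = L_k + Σ_j α_j δ_j` on the path `{-k,…,k}`. -/
noncomputable def Hmat (k : ℕ) (α : ℤ → ℝ) : Matrix (Fin (2*k+1)) (Fin (2*k+1)) ℝ :=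
  pathLap (2*k+1) + potMat k α

/-- The set of eigenvalues of a real matrix. -/
def evs {n : ℕ} (M : Matrix (Fin n) (Fin n) ℝ) : Set ℝ :=
  {μ | ∃ f : Fin n → ℝ, f ≠ 0 ∧ M.mulVec f = μ • f}

/-- Lowest eigenvalue. -/
noncomputable def lam0 {n : ℕ} (M : Matrix (Fin n) (Fin n) ℝ) : ℝ := sInf (evs M)

/-- Second-lowest eigenvalue (lowest eigenvalue above the ground state energy). -/
noncomputable def lam1 {n : ℕ} (M : Matrix (Fin n) (Fin n) ℝ) : ℝ :=
  sInf (evs M \ {lam0 M})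

/-- Spectral gap. -/
noncomputable def gap {n : ℕ} (M : Matrix (Fin n) (Fin n) ℝ) : ℝ := lam1 M - lam0 M

/-- `λ_0(V_m, ∞δ_0) = 2 - 2cos(π/(2m+1))`, the Dirichlet ground state energy. -/
noncomputable def dirEVZ (m : ℤ) : ℝ := 2 - 2 * Real.cos (Real.pi / (2 * m + 1))

/-- Index of the integer vertex `j ∈ {-k,…,k}` inside `Fin (2k+1)`. -/
def idx (k : ℕ) (j : ℤ) : Fin (2*k+1) := ⟨(j + k).toNat % (2*k+1), Nat.mod_lt _ (by omega)⟩

/-- `φ` is the normalized strictly positive ground state of `H_{k,α}`. -/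
noncomputable def isGS (k : ℕ) (α : ℤ → ℝ) (φ : Fin (2*k+1) → ℝ) : Prop :=
  (Hmat k α).mulVec φ = lam0 (Hmat k α) • φ ∧ (∑ i, φ i ^ 2 = 1) ∧ ∀ i, 0 < φ i

/-- The single-site potential `α δ_0`. -/
noncomputable def single0 (α : ℝ) : ℤ → ℝ := fun j => if j = 0 then α else 0

section spectral
variable {n : ℕ} {A : Matrix (Fin n) (Fin n) ℝ}

lemma dot_mulVec_symm (hA : A.IsHermitian) (x y : Fin n → ℝ) :
    x ⬝ᵥ (A *ᵥ y) = (A *ᵥ x) ⬝ᵥ y := by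
  have ht : Aᵀ = A := by
    have := hA.eq
    rw [← conjTranspose_eq_transpose_of_trivial]; exact this
  rw [dotProduct_mulVec, ← ht, vecMul_transpose, ht]

lemma inner_eq_dot (x y : EuclideanSpace ℝ (Fin n)) : (inner ℝ x y : ℝ) = (x : Fin n → ℝ) ⬝ᵥ y := by
  simp [PiLp.inner_apply, dotProduct, mul_comm]

lemma evs_subset_range (hA : A.IsHermitian) : evs A ⊆ Set.range hA.eigenvalues := by
  rintro μ ⟨f, hf, hEq⟩
  set B := hA.eigenvectorBasis with hB
  set F : EuclideanSpace ℝ (Fin n) := WithLp.toLp 2 f with hF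
  have hex : ∃ i, (inner ℝ (B i) F : ℝ) ≠ 0 := by
    by_contra h
    push_neg at h
    apply hf
    have : B.repr F = 0 := by
      ext i
      simpa [B.repr_apply_apply] using h i
    have hF0 : F = 0 := B.repr.injective (by rw [this, map_zero])
    simpa [hF] using congrArg WithLp.ofLp hF0
  obtain ⟨i, hi⟩ := hex
  refine ⟨i, ?_⟩
  have hm : A *ᵥ (B i : Fin n → ℝ) = hA.eigenvalues i • (B i : Fin n → ℝ) :=
    hA.mulVec_eigenvectorBasis i
  have h1 : (B i : Fin n → ℝ) ⬝ᵥ (A *ᵥ f) = hA.eigenvalues i * ((B i : Fin n → ℝ) ⬝ᵥ f) := by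
    rw [dot_mulVec_symm hA, hm, smul_dotProduct]
    rfl
  have h2 : (B i : Fin n → ℝ) ⬝ᵥ (A *ᵥ f) = μ * ((B i : Fin n → ℝ) ⬝ᵥ f) := by
    rw [hEq, dotProduct_smul]; rfl
  have hc : (B i : Fin n → ℝ) ⬝ᵥ f ≠ 0 := by
    rwa [inner_eq_dot] at hi
  have := h1.symm.trans h2
  exact mul_right_cancel₀ hc this

lemma range_subset_evs (hA : A.IsHermitian) : Set.range hA.eigenvalues ⊆ evs A := by
  rintro μ ⟨i, rfl⟩
  exact ⟨hA.eigenvectorBasis i, by simpa using hA.eigenvectorBasis.orthonormal.ne_zero i,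
    hA.mulVec_eigenvectorBasis i⟩

lemma evs_bddBelow (hA : A.IsHermitian) : BddBelow (evs A) :=
  ((Set.finite_range hA.eigenvalues).bddBelow).mono (evs_subset_range hA)

lemma lam0_le_eigenvalue (hA : A.IsHermitian) (i : Fin n) : lam0 A ≤ hA.eigenvalues i :=
  csInf_le (evs_bddBelow hA) (range_subset_evs hA ⟨i, rfl⟩)

lemma lam0_mul_le_quadform (hA : A.IsHermitian) (f : Fin n → ℝ) :
    lam0 A * (∑ i, f i ^ 2) ≤ ∑ i, f i * (A *ᵥ f) i := by
  set B := hA.eigenvectorBasis with hB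
  set F : EuclideanSpace ℝ (Fin n) := WithLp.toLp 2 f with hF
  set G : EuclideanSpace ℝ (Fin n) := WithLp.toLp 2 (A *ᵥ f) with hG
  have hnorm : ∑ i, f i ^ 2 = ∑ i, (inner ℝ F (B i) : ℝ) * inner ℝ (B i) F := by
    rw [B.sum_inner_mul_inner F F, inner_eq_dot]
    simp [dotProduct, pow_two, hF]
  have hquad : ∑ i, f i * (A *ᵥ f) i
      = ∑ i, hA.eigenvalues i * ((inner ℝ F (B i) : ℝ) * inner ℝ (B i) F) := by
    have h1 : ∑ i, f i * (A *ᵥ f) i = (inner ℝ F G : ℝ) := by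
      rw [inner_eq_dot]; simp [dotProduct, hF, hG]
    rw [h1, ← B.sum_inner_mul_inner F G]
    apply Finset.sum_congr rfl
    intro i _
    have hm : A *ᵥ (B i : Fin n → ℝ) = hA.eigenvalues i • (B i : Fin n → ℝ) :=
      hA.mulVec_eigenvectorBasis i
    have : (inner ℝ (B i) G : ℝ) = hA.eigenvalues i * inner ℝ (B i) F := by
      rw [inner_eq_dot, inner_eq_dot, hG, hF, WithLp.ofLp_toLp, WithLp.ofLp_toLp]
      rw [dot_mulVec_symm hA, hm, smul_dotProduct]
      rfl
    rw [this]; ring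
  rw [hnorm, hquad, Finset.mul_sum]
  apply Finset.sum_le_sum
  intro i _
  have hpos : (0:ℝ) ≤ (inner ℝ F (B i) : ℝ) * inner ℝ (B i) F := by
    rw [real_inner_comm F (B i)]
    exact mul_self_nonneg _
  exact mul_le_mul_of_nonneg_right (lam0_le_eigenvalue hA i) hpos

end spectral

lemma sum_ite_val {n : ℕ} (c : Fin n → ℝ) (t : ℕ) :
    ∑ j : Fin n, (if (j : ℕ) = t then c j else 0) = if h : t < n then c ⟨t, h⟩ else 0 := by
  by_cases h : t < n
  · rw [dif_pos h]
    rw [Finset.sum_eq_single ⟨t, h⟩]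
    · simp
    · intro b _ hb
      rw [if_neg]
      simpa [Fin.ext_iff] using hb
    · simp
  · rw [dif_neg h]
    apply Finset.sum_eq_zero
    intro j _
    rw [if_neg]
    omega

lemma pathLap_entry_split {n : ℕ} (f : Fin n → ℝ) (i j : Fin n) :
    pathLap n i j * f j =
      (if (j : ℕ) = (i : ℕ) then (if (i:ℕ) = 0 ∨ (i:ℕ) = n - 1 then 1 else 2) * f j else 0)
      + (if (j : ℕ) = (i : ℕ) + 1 then -f j else 0)
      + (if (j : ℕ) + 1 = (i : ℕ) then -f j else 0) := by
  simp only [pathLap, Matrix.of_apply]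
  split_ifs <;> simp_all [Fin.ext_iff] <;> try ring
  all_goals omega

lemma pathLap_mulVec {n : ℕ} (f : Fin n → ℝ) (i : Fin n) :
    (pathLap n *ᵥ f) i =
      (if (i:ℕ) = 0 ∨ (i:ℕ) = n - 1 then 1 else 2) * f i
      + (if h : (i:ℕ) + 1 < n then -f ⟨(i:ℕ)+1, h⟩ else 0)
      + (if h : 0 < (i:ℕ) then -f ⟨(i:ℕ)-1, by omega⟩ else 0) := by
  have : (pathLap n *ᵥ f) i = ∑ j, pathLap n i j * f j := rfl
  rw [this]
  have := fun j => pathLap_entry_split f i j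
  rw [Finset.sum_congr rfl (fun j _ => this j)]
  rw [Finset.sum_add_distrib, Finset.sum_add_distrib]
  congr 1
  · congr 1
    · rw [sum_ite_val (fun j => (if (i:ℕ) = 0 ∨ (i:ℕ) = n - 1 then 1 else 2) * f j) (i:ℕ)]
      rw [dif_pos i.isLt]
    · rw [sum_ite_val (fun j => -f j) ((i:ℕ)+1)]
  · by_cases h : 0 < (i:ℕ)
    · rw [dif_pos h]
      have hc : ∀ j : Fin n, ((j:ℕ) + 1 = (i:ℕ)) = ((j:ℕ) = (i:ℕ) - 1) := by
        intro j; apply propext; omega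
      calc ∑ j : Fin n, (if (j:ℕ) + 1 = (i:ℕ) then -f j else 0)
          = ∑ j : Fin n, (if (j:ℕ) = (i:ℕ) - 1 then -f j else 0) := by
            apply Finset.sum_congr rfl; intro j _
            congr 1
            exact hc j
        _ = _ := by rw [sum_ite_val (fun j => -f j) ((i:ℕ)-1), dif_pos (by omega : (i:ℕ)-1 < n)]
    · rw [dif_neg h]
      apply Finset.sum_eq_zero
      intro j _
      rw [if_neg]; omega

lemma pathLap_isHermitian (n : ℕ) : (pathLap n).IsHermitian := by
  rw [Matrix.IsHermitian]
  ext i j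
  simp only [Matrix.conjTranspose_apply, pathLap, Matrix.of_apply, star_trivial]
  split_ifs <;> simp_all [Fin.ext_iff] <;> omega

lemma Hmat_isHermitian (k : ℕ) (α : ℤ → ℝ) : (Hmat k α).IsHermitian := by
  apply (pathLap_isHermitian (2*k+1)).add
  exact Matrix.isHermitian_diagonal _

lemma cos_sum (a b : ℝ) : Real.cos (a - b) + Real.cos (a + b) = 2 * Real.cos b * Real.cos a := by
  rw [Real.cos_sub, Real.cos_add]; ring

lemma lam0_le_dirEVZ (k : ℕ) (α : ℤ → ℝ) (r : ℤ) (h0 : ∀ j < r, α j = 0)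
    (h1 : 1 ≤ (k:ℤ) + r) (h2 : r ≤ (k:ℤ)) :
    lam0 (Hmat k α) ≤ dirEVZ ((k:ℤ) + r) := by
  obtain ⟨m, hm⟩ : ∃ m : ℕ, (m:ℤ) = (k:ℤ) + r :=
    ⟨((k:ℤ)+r).toNat, Int.toNat_of_nonneg (by omega)⟩
  have hm1 : 1 ≤ m := by omega
  have hm2 : m ≤ 2*k := by omega
  set β := Real.pi / (2*(2*(m:ℝ)+1)) with hβ
  set lam := 2 - 2*Real.cos (2*β) with hlam
  have h2m : (0:ℝ) < 2*(m:ℝ)+1 := by positivity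
  have harg : Real.pi / (2*(m:ℝ)+1) = 2*β := by
    rw [hβ]; field_simp
  have hdim : dirEVZ ((k:ℤ)+r) = lam := by
    rw [dirEVZ, ← hm, hlam]
    push_cast
    rw [harg]
  have hcosm : Real.cos ((2*(m:ℝ)+1)*β) = 0 := by
    have : (2*(m:ℝ)+1)*β = Real.pi/2 := by
      rw [hβ]; field_simp
    rw [this, Real.cos_pi_div_two]
  set f : Fin (2*k+1) → ℝ := fun i => if (i:ℕ) < m then Real.cos ((2*(i:ℕ)+1)*β) else 0
    with hf
  have hf' : ∀ (t : ℕ) (h : t < 2*k+1), t ≤ m → f ⟨t, h⟩ = Real.cos ((2*(t:ℝ)+1)*β) := by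
    intro t h ht
    rcases lt_or_eq_of_le ht with h' | h'
    · simp only [hf]; rw [if_pos h']
    · subst h'
      simp only [hf]
      rw [if_neg (lt_irrefl _), hcosm]
  have key : ∀ i : Fin (2*k+1), f i * ((Hmat k α) *ᵥ f) i = lam * f i ^ 2 := by
    intro i
    have hval : ((Hmat k α) *ᵥ f) i = (pathLap (2*k+1) *ᵥ f) i + α ((i:ℤ) - k) * f i := by
      rw [Hmat, Matrix.add_mulVec]
      simp [potMat, Matrix.mulVec_diagonal]
    by_cases hi : (i:ℕ) < m
    · have hfi : f i = Real.cos ((2*((i:ℕ):ℝ)+1)*β) := by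
        have : i = ⟨(i:ℕ), i.isLt⟩ := by ext; rfl
        rw [this, hf' (i:ℕ) i.isLt (le_of_lt hi)]
      have hα : α ((i:ℤ) - k) = 0 := by
        apply h0
        have : ((i:ℕ):ℤ) < m := by exact_mod_cast hi
        omega
      suffices hg : ((Hmat k α) *ᵥ f) i = lam * f i by rw [hg, pow_two]; ring
      rw [hval, hα, zero_mul, add_zero, pathLap_mulVec, hlam]
      by_cases hi0 : (i:ℕ) = 0
      · rw [if_pos (Or.inl hi0), dif_pos (show (i:ℕ)+1 < 2*k+1 by omega),
          dif_neg (by omega)]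
        rw [hf' ((i:ℕ)+1) (by omega) (by omega), hfi]
        have hc : ((i:ℕ):ℝ) = 0 := by rw [hi0]; norm_num
        rw [hc]
        push_cast [hi0]
        have h := cos_sum (2*β) β
        rw [show 2*β - β = β by ring] at h
        rw [show (2*(0:ℝ)+1)*β = β by ring, show (2*(1:ℝ)+1)*β = 2*β + β by ring]
        linarith [h]
      · have hi1 : 1 ≤ (i:ℕ) := by omega
        rw [if_neg (by omega), dif_pos (show (i:ℕ)+1 < 2*k+1 by omega), dif_pos (by omega)]
        rw [hf' ((i:ℕ)+1) (by omega) (by omega), hf' ((i:ℕ)-1) (by omega) (by omega), hfi]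
        have hc1 : (((i:ℕ)+1 : ℕ):ℝ) = ((i:ℕ):ℝ) + 1 := by push_cast; ring
        have hc2 : (((i:ℕ)-1 : ℕ):ℝ) = ((i:ℕ):ℝ) - 1 := by
          push_cast [Nat.cast_sub hi1]; ring
        rw [hc1, hc2]
        have h := cos_sum ((2*((i:ℕ):ℝ)+1)*β) (2*β)
        rw [show (2*((i:ℕ):ℝ)+1)*β - 2*β = (2*(((i:ℕ):ℝ)-1)+1)*β by ring,
          show (2*((i:ℕ):ℝ)+1)*β + 2*β = (2*(((i:ℕ):ℝ)+1)+1)*β by ring] at h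
        linarith [h]
    · have hfi : f i = 0 := by simp only [hf]; rw [if_neg hi]
      rw [hfi]; ring
  have hsum : ∑ i, f i * ((Hmat k α) *ᵥ f) i = lam * ∑ i, f i ^ 2 := by
    rw [Finset.mul_sum]
    exact Finset.sum_congr rfl fun i _ => key i
  have hpos : 0 < ∑ i, f i ^ 2 := by
    have hβpos : 0 < β := by rw [hβ]; positivity
    have hβlt : β < Real.pi/2 := by
      rw [hβ, div_lt_div_iff₀ (by positivity) (by norm_num)]
      have hmr : (1:ℝ) ≤ (m:ℝ) := by exact_mod_cast hm1
      nlinarith [Real.pi_pos]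
    have hcβ : 0 < Real.cos β :=
      Real.cos_pos_of_mem_Ioo ⟨by linarith [Real.pi_pos], hβlt⟩
    set i0 : Fin (2*k+1) := ⟨0, by omega⟩ with hi0
    have hfi0 : f i0 = Real.cos β := by
      rw [hf' 0 (by omega) (by omega)]
      norm_num
    have hle : f i0 ^ 2 ≤ ∑ i, f i ^ 2 :=
      Finset.single_le_sum (fun i _ => sq_nonneg (f i)) (Finset.mem_univ i0)
    have : 0 < f i0 ^ 2 := by rw [hfi0]; positivity
    linarith
  have hq := lam0_mul_le_quadform (Hmat_isHermitian k α) f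
  rw [hsum] at hq
  rw [hdim]
  exact (mul_le_mul_iff_left₀ hpos).mp hq

lemma evs_submatrix_subset {n : ℕ} (M : Matrix (Fin n) (Fin n) ℝ) (σ : Equiv.Perm (Fin n)) :
    evs M ⊆ evs (M.submatrix σ σ) := by
  rintro μ ⟨f, hf, hEq⟩
  refine ⟨f ∘ σ, ?_, ?_⟩
  · intro h
    apply hf
    ext i
    have := congrFun h (σ.symm i)
    simpa using this
  · rw [Matrix.submatrix_mulVec_equiv]
    have hc : (f ∘ σ) ∘ σ.symm = f := by ext i; simp
    rw [hc, hEq]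
    rfl

lemma evs_submatrix {n : ℕ} (M : Matrix (Fin n) (Fin n) ℝ) (σ : Equiv.Perm (Fin n)) :
    evs (M.submatrix σ σ) = evs M := by
  apply Set.Subset.antisymm
  · have h := evs_submatrix_subset (M.submatrix σ σ) σ.symm
    rwa [Matrix.submatrix_submatrix, Equiv.self_comp_symm, Matrix.submatrix_id_id] at h
  · exact evs_submatrix_subset M σ

lemma pathLap_reflect (n : ℕ) :
    (pathLap n).submatrix Fin.revPerm Fin.revPerm = pathLap n := by
  ext i j
  have hi := i.isLt
  have hj := j.isLt
  simp only [pathLap, Matrix.submatrix_apply, Matrix.of_apply, Fin.revPerm_apply]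
  split_ifs <;> simp_all [Fin.ext_iff, Fin.val_rev] <;> omega

lemma potMat_reflect (k : ℕ) (α : ℤ → ℝ) :
    (potMat k α).submatrix Fin.revPerm Fin.revPerm = potMat k (fun j => α (-j)) := by
  ext i j
  have hi := i.isLt
  simp only [potMat, Matrix.submatrix_apply, Matrix.diagonal_apply, Fin.revPerm_apply]
  by_cases h : i = j
  · subst h
    rw [if_pos rfl, if_pos rfl]
    congr 1
    simp only [Fin.val_rev]
    push_cast
    omega
  · rw [if_neg (fun hc => h (Fin.rev_inj.mp hc)), if_neg h]

lemma Hmat_reflect (k : ℕ) (α : ℤ → ℝ) :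
    (Hmat k α).submatrix Fin.revPerm Fin.revPerm = Hmat k (fun j => α (-j)) := by
  ext i j
  rw [Hmat, Hmat, Matrix.submatrix_apply, Matrix.add_apply, Matrix.add_apply]
  have h1 := congrFun (congrFun (pathLap_reflect (2*k+1)) i) j
  have h2 := congrFun (congrFun (potMat_reflect k α) i) j
  simp only [Matrix.submatrix_apply] at h1 h2
  rw [h1, h2]


/-- `2 λ_0(V_k, α) ≤ λ_0(V_{k+r_min}, ∞δ_0) + λ_0(V_{k-r_max}, ∞δ_0)` for
all sufficiently large `k`. -/
theorem stmt11 (α : ℤ → ℝ) (J : Finset ℤ) (hne : J.Nonempty)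
    (hsupp : ∀ j : ℤ, α j ≠ 0 ↔ j ∈ J) (hpos : ∀ j ∈ J, 0 < α j) :
    ∀ᶠ k : ℕ in atTop,
      2 * lam0 (Hmat k α) ≤
        dirEVZ ((k : ℤ) + J.min' hne) + dirEVZ ((k : ℤ) - J.max' hne) := by
  set rmin := J.min' hne with hrmin
  set rmax := J.max' hne with hrmax
  filter_upwards [Filter.eventually_ge_atTop (1 + |rmin| + |rmax|).toNat] with k hk
  have hk' : (1 + |rmin| + |rmax| : ℤ) ≤ (k:ℤ) := Int.toNat_le.mp hk
  have habs1 := le_abs_self rmin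
  have habs2 := neg_abs_le rmin
  have habs3 := le_abs_self rmax
  have habs4 := neg_abs_le rmax
  have habsn1 := abs_nonneg rmin
  have habsn2 := abs_nonneg rmax
  -- left bound
  have hleft : lam0 (Hmat k α) ≤ dirEVZ ((k:ℤ) + rmin) := by
    apply lam0_le_dirEVZ k α rmin
    · intro j hj
      by_contra hja
      exact absurd (J.min'_le j ((hsupp j).mp hja)) (not_le.mpr hj)
    · linarith
    · linarith
  -- right bound
  have hev : evs (Hmat k (fun j => α (-j))) = evs (Hmat k α) := by
    rw [← Hmat_reflect, evs_submatrix]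
  have hlam : lam0 (Hmat k α) = lam0 (Hmat k (fun j => α (-j))) := by
    rw [lam0, lam0, hev]
  have hright : lam0 (Hmat k α) ≤ dirEVZ ((k:ℤ) - rmax) := by
    rw [hlam]
    have h := lam0_le_dirEVZ k (fun j => α (-j)) (-rmax) ?_ (by linarith) (by linarith)
    · rwa [show (k:ℤ) + -rmax = (k:ℤ) - rmax by ring] at h
    · intro j hj
      by_contra hja
      have hmem : -j ∈ J := (hsupp (-j)).mp hja
      have := J.le_max' (-j) hmem
      omega
  linarith
end

section
/- Decay of the ground state at the potential site (Remark 3.2): for H_{k,α} = L_k + α δ_0 with α > 0, there is a constant c > 0 such that for all but finitely many k, the normalized positive ground state satisfies φ_k(0) ≤ c α^{-1} k^{-3/2}. -/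
open Finset Filter Topology Matrix

noncomputable def Vv {n : ℕ} (v : Fin n → ℝ) (m : ℕ) : ℝ := if h : m < n then v ⟨m, h⟩ else 0

lemma Vv_out {n : ℕ} (v : Fin n → ℝ) {m : ℕ} (h : ¬ m < n) : Vv v m = 0 := dif_neg h

lemma pathLap_symm (n : ℕ) (i j : Fin n) : pathLap n j i = pathLap n i j := by
  unfold pathLap
  simp only [Matrix.of_apply]
  rcases eq_or_ne i j with h | h
  · subst h; rfl
  · rw [if_neg h.symm, if_neg h]
    split_ifs with h1 h2 h2 <;> first | rfl | omega

lemma rowL {n : ℕ} (v : Fin n → ℝ) (i : Fin n) :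
    ((pathLap n).mulVec v) i =
      (if i.val = 0 ∨ i.val = n - 1 then 1 else 2) * v i
        - (if i.val = 0 then 0 else Vv v (i.val - 1)) - Vv v (i.val + 1) := by
  have key : ∀ j : Fin n, pathLap n i j * v j =
      (if j = i then (if i.val = 0 ∨ i.val = n - 1 then (1:ℝ) else 2) * v i else 0)
      + ((if j.val = i.val - 1 ∧ i.val ≠ 0 then -Vv v j.val else 0)
      + (if j.val = i.val + 1 then -Vv v j.val else 0)) := by
    intro j
    have hV : Vv v j.val = v j := by simp [Vv, j.isLt]
    unfold pathLap
    simp only [Matrix.of_apply, hV]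
    rcases eq_or_ne i j with h | h
    · subst h
      rw [if_pos rfl, if_pos rfl,
        if_neg (show ¬((i:ℕ) = (i:ℕ) - 1 ∧ (i:ℕ) ≠ 0) by omega),
        if_neg (show ¬((i:ℕ) = (i:ℕ) + 1) by omega)]
      ring
    · have hne : (i:ℕ) ≠ (j:ℕ) := fun hh => h (Fin.ext hh)
      rw [if_neg h, if_neg (show ¬ j = i from fun hh => h hh.symm)]
      split_ifs <;> (try (exfalso; omega)) <;> ring
  rw [Matrix.mulVec, dotProduct]
  simp only [key]
  rw [Finset.sum_add_distrib, Finset.sum_add_distrib]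
  rw [Finset.sum_ite_eq' Finset.univ i, if_pos (Finset.mem_univ i)]
  have e2 : (∑ j : Fin n, if j.val = i.val - 1 ∧ i.val ≠ 0 then -Vv v j.val else 0)
      = (if i.val = 0 then 0 else -Vv v (i.val - 1)) := by
    rw [Fin.sum_univ_eq_sum_range (fun m => if m = i.val - 1 ∧ i.val ≠ 0 then -Vv v m else 0)]
    by_cases h0 : i.val = 0
    · simp [h0]
    · rw [if_neg h0]
      have : ∀ m, (if m = i.val - 1 ∧ i.val ≠ 0 then -Vv v m else 0)
          = (if m = i.val - 1 then -Vv v m else 0) := by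
        intro m; by_cases hm : m = i.val - 1 <;> simp [hm, h0]
      simp only [this]
      rw [Finset.sum_ite_eq' (Finset.range n) (i.val - 1)]
      rw [if_pos (Finset.mem_range.2 (by omega))]
  have e3 : (∑ j : Fin n, if j.val = i.val + 1 then -Vv v j.val else 0) = -Vv v (i.val + 1) := by
    rw [Fin.sum_univ_eq_sum_range (fun m => if m = i.val + 1 then -Vv v m else 0)]
    rw [Finset.sum_ite_eq' (Finset.range n) (i.val + 1)]
    by_cases h : i.val + 1 < n
    · rw [if_pos (Finset.mem_range.2 h)]
    · rw [if_neg (by simpa using h), Vv_out v h, neg_zero]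
  rw [e2, e3]
  by_cases h0 : i.val = 0 <;> simp [h0] <;> ring

lemma colsum {n : ℕ} (hn : 2 ≤ n) (i : Fin n) : ∑ j, pathLap n j i = 0 := by
  have h1 : ∑ j, pathLap n j i = ((pathLap n).mulVec (fun _ => 1)) i := by
    rw [Matrix.mulVec, dotProduct]
    simp only [mul_one]
    exact Finset.sum_congr rfl fun j _ => pathLap_symm n i j
  rw [h1, rowL]
  have hV : ∀ m, Vv (fun _ : Fin n => (1:ℝ)) m = if m < n then 1 else 0 := by
    intro m; unfold Vv; split_ifs <;> rfl
  rw [hV, hV]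
  have hi := i.isLt
  split_ifs <;> first | (exfalso; omega) | norm_num

lemma sum_mulVec {n : ℕ} (M : Matrix (Fin n) (Fin n) ℝ) (v : Fin n → ℝ) :
    ∑ j, (M.mulVec v) j = ∑ i, (∑ j, M j i) * v i := by
  simp only [Matrix.mulVec, dotProduct, Finset.sum_mul]
  rw [Finset.sum_comm]

lemma Hmat_symm (k : ℕ) (a : ℤ → ℝ) (i j : Fin (2*k+1)) : Hmat k a j i = Hmat k a i j := by
  unfold Hmat potMat
  simp only [Matrix.add_apply]
  rw [pathLap_symm]
  rcases eq_or_ne i j with h | h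
  · subst h; rfl
  · rw [Matrix.diagonal_apply_ne _ h, Matrix.diagonal_apply_ne _ h.symm]

lemma Hrow (k : ℕ) (a : ℤ → ℝ) (v : Fin (2*k+1) → ℝ) (i : Fin (2*k+1)) :
    ((Hmat k a).mulVec v) i =
      (if (i:ℕ) = 0 ∨ (i:ℕ) = 2*k+1-1 then 1 else 2) * v i
        - (if (i:ℕ) = 0 then 0 else Vv v ((i:ℕ) - 1)) - Vv v ((i:ℕ) + 1)
        + a ((i:ℤ) - k) * v i := by
  unfold Hmat
  rw [Matrix.add_mulVec, Pi.add_apply, rowL]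
  unfold potMat
  rw [Matrix.mulVec_diagonal]

lemma sumH (k : ℕ) (hk : 1 ≤ k) (a : ℤ → ℝ) (v : Fin (2*k+1) → ℝ) :
    ∑ j, ((Hmat k a).mulVec v) j = ∑ i : Fin (2*k+1), a ((i:ℤ) - k) * v i := by
  rw [sum_mulVec]
  refine Finset.sum_congr rfl fun i _ => ?_
  have hcol : ∑ j, Hmat k a j i = a ((i:ℤ) - k) := by
    unfold Hmat
    simp only [Matrix.add_apply, Finset.sum_add_distrib]
    rw [colsum (by omega) i]
    unfold potMat
    simp only [Matrix.diagonal_apply]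
    rw [Finset.sum_ite_eq' Finset.univ i (fun j => a ((j:ℤ) - k)), if_pos (Finset.mem_univ i)]
    ring
  rw [hcol]

lemma idx_k0 (k : ℕ) : idx k 0 = ⟨k, by omega⟩ := by
  apply Fin.ext
  unfold idx
  simp only [zero_add, Int.toNat_natCast]
  exact Nat.mod_eq_of_lt (by omega)

lemma sum_single0 (k : ℕ) (α : ℝ) (v : Fin (2*k+1) → ℝ) :
    ∑ i : Fin (2*k+1), single0 α ((i:ℤ) - k) * v i = α * v (idx k 0) := by
  rw [idx_k0]
  rw [Finset.sum_eq_single (⟨k, by omega⟩ : Fin (2*k+1))]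
  · unfold single0; norm_num
  · intro b _ hb
    unfold single0
    rw [if_neg, zero_mul]
    intro hc
    apply hb
    apply Fin.ext
    have hb' : (b:ℤ) = k := by omega
    exact_mod_cast hb'
  · intro h; exact absurd (Finset.mem_univ _) h

lemma comparison {n : ℕ} (H : Matrix (Fin n) (Fin n) ℝ) (hsym : ∀ i j, H j i = H i j)
    (lam μ : ℝ) (φ w : Fin n → ℝ) (hφ : H.mulVec φ = lam • φ) (hφpos : ∀ i, 0 < φ i)
    (hw0 : ∀ i, 0 ≤ w i) (i0 : Fin n) (hwpos : 0 < w i0)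
    (hsub : ∀ i, (H.mulVec w) i ≤ μ * w i) : lam ≤ μ := by
  set S := ∑ i, w i * φ i with hS
  have hSpos : 0 < S := by
    have h1 : w i0 * φ i0 ≤ S := Finset.single_le_sum (f := fun i => w i * φ i)
      (fun i _ => mul_nonneg (hw0 i) (hφpos i).le) (Finset.mem_univ i0)
    nlinarith [mul_pos hwpos (hφpos i0)]
  have key : lam * S ≤ μ * S := by
    have e1 : lam * S = ∑ i, w i * (H.mulVec φ) i := by
      rw [hφ, hS, Finset.mul_sum]
      exact Finset.sum_congr rfl fun i _ => by simp [smul_eq_mul]; ring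
    have e2 : ∑ i, w i * (H.mulVec φ) i = ∑ j, (H.mulVec w) j * φ j := by
      simp only [Matrix.mulVec, dotProduct, Finset.mul_sum, Finset.sum_mul]
      rw [Finset.sum_comm]
      refine Finset.sum_congr rfl fun j _ => Finset.sum_congr rfl fun i _ => ?_
      rw [hsym i j]
      ring
    have e3 : ∑ j, (H.mulVec w) j * φ j ≤ ∑ j, (μ * w j) * φ j :=
      Finset.sum_le_sum fun j _ => mul_le_mul_of_nonneg_right (hsub j) (hφpos j).le
    calc lam * S = ∑ i, w i * (H.mulVec φ) i := e1
      _ = ∑ j, (H.mulVec w) j * φ j := e2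
      _ ≤ ∑ j, (μ * w j) * φ j := e3
      _ = μ * S := by rw [hS, Finset.mul_sum]; exact Finset.sum_congr rfl fun j _ => by ring
  exact le_of_mul_le_mul_right key hSpos

lemma endpoint_trig {θ : ℝ} (h0 : 0 < θ) (h1 : θ ≤ 1) :
    Real.cos θ - Real.cos (2*θ) ≤ 3*θ^2 * Real.cos θ := by
  have hc : 1 - θ^2/2 ≤ Real.cos θ := Real.one_sub_sq_div_two_le_cos
  have hc1 : Real.cos θ ≤ 1 := Real.cos_le_one θ
  have h2 : Real.cos (2*θ) = 2 * Real.cos θ ^ 2 - 1 := Real.cos_two_mul θ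
  have hhalf : (1:ℝ)/2 ≤ Real.cos θ := by nlinarith
  nlinarith [sq_nonneg θ, sq_nonneg (1 - Real.cos θ)]

lemma subsol (k : ℕ) (hk : 1 ≤ k) (α : ℝ) :
    ∃ w : Fin (2*k+1) → ℝ, (∀ i, 0 ≤ w i) ∧ (0 < w ⟨0, by omega⟩) ∧
      ∀ i, ((Hmat k (single0 α)).mulVec w) i ≤ (3 * (Real.pi/(2*(k:ℝ)+2))^2) * w i := by
  set θ : ℝ := Real.pi/(2*(k:ℝ)+2) with hθ
  have hkR : (1:ℝ) ≤ (k:ℝ) := by exact_mod_cast hk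
  have hθpos : 0 < θ := by rw [hθ]; positivity
  have hθ1 : θ ≤ 1 := by
    rw [hθ, div_le_one (by positivity)]
    nlinarith [Real.pi_le_four]
  set s : ℕ → ℝ := fun m => Real.sin (θ * m) with hs
  have hθk : θ * (k:ℝ) = Real.pi/2 - θ := by
    rw [hθ]; field_simp; ring
  have hs_nonneg : ∀ m : ℕ, m ≤ k → 0 ≤ s m := by
    intro m hm
    apply Real.sin_nonneg_of_nonneg_of_le_pi
    · positivity
    · have hmk : (m:ℝ) ≤ (k:ℝ) := by exact_mod_cast hm
      nlinarith [Real.pi_pos]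
  have hs0 : s 0 = 0 := by simp [hs]
  have hcosθ : 1 - θ^2/2 ≤ Real.cos θ := Real.one_sub_sq_div_two_le_cos
  have hsk : s k = Real.cos θ := by
    simp only [hs]; rw [hθk, Real.sin_pi_div_two_sub]
  have hsk1 : s (k-1) = Real.cos (2*θ) := by
    have hc : ((k-1:ℕ):ℝ) = (k:ℝ) - 1 := by
      rw [Nat.cast_sub hk]; norm_num
    have h2 : θ * ((k-1:ℕ):ℝ) = Real.pi/2 - 2*θ := by
      rw [hc]; nlinarith [hθk]
    simp only [hs]; rw [h2, Real.sin_pi_div_two_sub]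
  have hrec : ∀ m : ℕ, 1 ≤ m → s (m+1) + s (m-1) = 2 * Real.cos θ * s m := by
    intro m hm
    have hc : ((m-1:ℕ):ℝ) = (m:ℝ) - 1 := by
      rw [Nat.cast_sub hm]; norm_num
    simp only [hs]
    push_cast [hc]
    rw [show θ*((m:ℝ)+1) = θ*m + θ by ring, show θ*((m:ℝ)-1) = θ*m - θ by ring,
      Real.sin_add, Real.sin_sub]
    ring
  have hgap : 2 - 2*Real.cos θ ≤ 3*θ^2 := by nlinarith
  have hend : s k - s (k-1) ≤ 3*θ^2 * s k := by
    rw [hsk, hsk1]; exact endpoint_trig hθpos hθ1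
  set w : Fin (2*k+1) → ℝ := fun i => s ((k - (i:ℕ)) + ((i:ℕ) - k)) with hw
  have hwval : ∀ i : Fin (2*k+1), w i = s ((k - (i:ℕ)) + ((i:ℕ) - k)) := fun i => rfl
  have hVv : ∀ q : ℕ, q < 2*k+1 → Vv w q = s ((k - q) + (q - k)) := by
    intro q h
    unfold Vv
    rw [dif_pos h]
  refine ⟨w, ?_, ?_, ?_⟩
  · intro i; rw [hwval]; exact hs_nonneg _ (by omega)
  · rw [hwval]
    simp only [Fin.val_mk]
    rw [show (k - 0) + (0 - k) = k from by omega, hsk]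
    nlinarith
  · intro i
    rw [Hrow]
    have hp := i.isLt
    rcases Nat.lt_trichotomy (i:ℕ) k with hlt | heq | hgt
    · -- i < k
      have hpot : single0 α ((i:ℤ) - (k:ℤ)) = 0 := by
        unfold single0; rw [if_neg (by omega)]
      rw [hpot, hwval]
      rcases Nat.eq_zero_or_pos (i:ℕ) with h0 | h0
      · -- left endpoint
        rw [if_pos (Or.inl h0), if_pos h0, hVv ((i:ℕ)+1) (by omega)]
        rw [show (k - ((i:ℕ)+1)) + (((i:ℕ)+1) - k) = k - 1 from by omega,
          show (k - (i:ℕ)) + ((i:ℕ) - k) = k from by omega]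
        nlinarith [hend]
      · -- interior left
        rw [if_neg (by omega), if_neg (by omega),
          hVv ((i:ℕ)-1) (by omega), hVv ((i:ℕ)+1) (by omega)]
        rw [show (k - ((i:ℕ)-1)) + (((i:ℕ)-1) - k) = (k - (i:ℕ)) + 1 from by omega,
          show (k - ((i:ℕ)+1)) + (((i:ℕ)+1) - k) = (k - (i:ℕ)) - 1 from by omega,
          show (k - (i:ℕ)) + ((i:ℕ) - k) = k - (i:ℕ) from by omega]
        have hr := hrec (k - (i:ℕ)) (by omega)
        have hn := hs_nonneg (k - (i:ℕ)) (by omega)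
        nlinarith [mul_nonneg (sub_nonneg.2 hgap) hn]
    · -- center
      have hpot : single0 α ((i:ℤ) - (k:ℤ)) = α := by
        unfold single0; rw [if_pos (by omega)]
      rw [hpot, hwval]
      rw [if_neg (by omega), if_neg (by omega),
        hVv ((i:ℕ)-1) (by omega), hVv ((i:ℕ)+1) (by omega)]
      rw [show (k - ((i:ℕ)-1)) + (((i:ℕ)-1) - k) = 1 from by omega,
        show (k - ((i:ℕ)+1)) + (((i:ℕ)+1) - k) = 1 from by omega,
        show (k - (i:ℕ)) + ((i:ℕ) - k) = 0 from by omega, hs0]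
      nlinarith [hs_nonneg 1 hk]
    · -- i > k
      have hpot : single0 α ((i:ℤ) - (k:ℤ)) = 0 := by
        unfold single0; rw [if_neg (by omega)]
      rw [hpot, hwval]
      rcases Nat.lt_or_ge (i:ℕ) (2*k) with h2k | h2k
      · -- interior right
        rw [if_neg (by omega), if_neg (by omega),
          hVv ((i:ℕ)-1) (by omega), hVv ((i:ℕ)+1) (by omega)]
        rw [show (k - ((i:ℕ)-1)) + (((i:ℕ)-1) - k) = ((i:ℕ) - k) - 1 from by omega,
          show (k - ((i:ℕ)+1)) + (((i:ℕ)+1) - k) = ((i:ℕ) - k) + 1 from by omega,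
          show (k - (i:ℕ)) + ((i:ℕ) - k) = (i:ℕ) - k from by omega]
        have hr := hrec ((i:ℕ) - k) (by omega)
        have hn := hs_nonneg ((i:ℕ) - k) (by omega)
        nlinarith [mul_nonneg (sub_nonneg.2 hgap) hn]
      · -- right endpoint, i = 2k
        have h2k' : (i:ℕ) = 2*k := by omega
        rw [if_pos (Or.inr (by omega)), if_neg (by omega),
          hVv ((i:ℕ)-1) (by omega), Vv_out w (by omega)]
        rw [show (k - ((i:ℕ)-1)) + (((i:ℕ)-1) - k) = k - 1 from by omega,
          show (k - (i:ℕ)) + ((i:ℕ) - k) = k from by omega]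
        nlinarith [hend]


/-- Remark 3.2: for `H_{k,α} = L_k + α δ_0` with `α > 0`, there is `c > 0`
such that for all but finitely many `k` the normalized positive ground state satisfies
`φ_k(0) ≤ c α⁻¹ k^{-3/2}`. -/
theorem stmt14 (α : ℝ) (hα : 0 < α) :
    ∃ c : ℝ, 0 < c ∧ ∀ᶠ k : ℕ in atTop, ∀ φ : Fin (2*k+1) → ℝ, isGS k (single0 α) φ →
      φ (idx k 0) ≤ c * α⁻¹ * ((k : ℝ) ^ ((3 : ℝ)/2))⁻¹ := by
  refine ⟨3*Real.pi^2/2, by positivity, ?_⟩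
  rw [Filter.eventually_atTop]
  refine ⟨1, fun k hk φ hGS => ?_⟩
  obtain ⟨hEig, hNorm, hPos⟩ := hGS
  have hkR : (1:ℝ) ≤ (k:ℝ) := by exact_mod_cast hk
  set lam := lam0 (Hmat k (single0 α)) with hlam
  have hid : α * φ (idx k 0) = lam * ∑ i, φ i := by
    have h1 := sumH k hk (single0 α) φ
    rw [hEig, sum_single0] at h1
    rw [← h1]
    simp [Pi.smul_apply, smul_eq_mul, Finset.mul_sum]
  have hS : 0 < ∑ i, φ i := Finset.sum_pos (fun i _ => hPos i) Finset.univ_nonempty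
  have hlam_pos : 0 < lam := by nlinarith [mul_pos hα (hPos (idx k 0))]
  obtain ⟨w, hw0, hwpos, hsub⟩ := subsol k hk α
  have hlam_le : lam ≤ 3 * (Real.pi/(2*(k:ℝ)+2))^2 :=
    comparison _ (Hmat_symm k (single0 α)) lam _ φ w hEig hPos hw0 _ hwpos hsub
  have hq : 0 < Real.sqrt k := Real.sqrt_pos.2 (by linarith)
  have hqq : Real.sqrt k * Real.sqrt k = (k:ℝ) := Real.mul_self_sqrt (by linarith)
  have hCS : ∑ i, φ i ≤ 2 * Real.sqrt k := by
    have h1 : (∑ i, φ i)^2 ≤ 2*(k:ℝ)+1 := by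
      calc (∑ i, φ i)^2 ≤ (∑ i, φ i^2) * (∑ _i : Fin (2*k+1), (1:ℝ)) := by
            simpa using Finset.sum_mul_sq_le_sq_mul_sq Finset.univ φ (fun _ => 1)
        _ = 2*(k:ℝ)+1 := by
            rw [hNorm, one_mul, Finset.sum_const, Finset.card_univ, Fintype.card_fin]
            push_cast; ring
    nlinarith [hS, hq, hqq, sq_nonneg ((∑ i, φ i) - 2*Real.sqrt k)]
  have h32 : (k:ℝ) ^ ((3:ℝ)/2) = (k:ℝ) * Real.sqrt k := by
    rw [show (3:ℝ)/2 = 1 + 1/2 by norm_num, Real.rpow_add (by linarith), Real.rpow_one,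
      ← Real.sqrt_eq_rpow]
  rw [h32]
  have hφ0 : φ (idx k 0) = lam * (∑ i, φ i) / α := by
    rw [eq_div_iff (ne_of_gt hα)]; linarith [hid]
  rw [hφ0]
  have hmain : lam * (∑ i, φ i) ≤ (3*Real.pi^2/2) * ((k:ℝ) * Real.sqrt k)⁻¹ := by
    have h1 : lam * (∑ i, φ i) ≤ (3 * (Real.pi/(2*(k:ℝ)+2))^2) * (2*Real.sqrt k) :=
      mul_le_mul hlam_le hCS (le_of_lt hS) (by positivity)
    refine h1.trans ?_
    have h2 : 3 * (Real.pi/(2*(k:ℝ)+2))^2 * (2*Real.sqrt k)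
        = (6*Real.pi^2*Real.sqrt k)/((2*(k:ℝ)+2)^2) := by
      rw [div_pow]; ring
    have h3 : (3*Real.pi^2/2) * ((k:ℝ)*Real.sqrt k)⁻¹
        = (3*Real.pi^2)/(2*((k:ℝ)*Real.sqrt k)) := by
      field_simp
    rw [h2, h3, div_le_div_iff₀ (by positivity) (by positivity)]
    nlinarith [hqq, sq_nonneg Real.pi, hkR,
      mul_nonneg (sq_nonneg Real.pi) (by linarith : (0:ℝ) ≤ (k:ℝ))]
  calc lam * (∑ i, φ i) / α ≤ ((3*Real.pi^2/2) * ((k:ℝ)*Real.sqrt k)⁻¹) / α := by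
        exact (div_le_div_iff_of_pos_right hα).2 hmain
    _ = 3*Real.pi^2/2 * α⁻¹ * ((k:ℝ)*Real.sqrt k)⁻¹ := by ring
end
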